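/- Let m ≥ 2 and S ⊆ ℤ^m be a finite set. For a prime p let s(p) = |π_p(S)| be the number of distinct residue classes of S mod p. Then the natural upper density of V(S) along cubes [−L,L]^m is at most ∏_{p ≤ P} (1 − s(p)/p^m) for every bound P; i.e., limsup_{L→∞} |V(S) ∩ [−L,L]^m| / (2L)^m ≤ ∏_{p prime, p ≤ P} (1 − s(p)/p^m). -/

import Mathlib

open scoped Classical
open Finset Filter Topology

lemma aux_piFinset_filter {m : ℕ} {α : Fin m → Type*} [∀ i, DecidableEq (α i)]
    (t : ∀ i, Finset (α i)) (p : ∀ i, α i → Prop) :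
    (Fintype.piFinset t).filter (fun z => ∀ i, p i (z i)) =
      Fintype.piFinset (fun i => (t i).filter (p i)) := by
  ext z
  simp only [Finset.mem_filter, Fintype.mem_piFinset]
  exact ⟨fun h i => ⟨h.1 i, h.2 i⟩, fun h => ⟨fun i => (h i).1, fun i => (h i).2⟩⟩

lemma aux_count_residue (L Q : ℕ) (c : ZMod Q) :
    ((Finset.Icc (-(L:ℤ)) (L:ℤ)).filter (fun a : ℤ => ((a : ZMod Q) = c))).card ≤ 2*L/Q + 1 := by
  rw [← Finset.card_range (2*L/Q + 1)]
  apply Finset.card_le_card_of_injOn (fun a : ℤ => (a + L).toNat / Q)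
  · intro a ha
    simp only [Finset.mem_coe, Finset.mem_filter, Finset.mem_Icc] at ha
    simp only [Finset.mem_coe, Finset.mem_range]
    have h1 : (a + L).toNat ≤ 2*L := by omega
    exact Nat.lt_succ_of_le (Nat.div_le_div_right h1)
  · intro a1 h1 a2 h2 heq
    simp only at heq
    simp only [Finset.coe_filter, Set.mem_setOf_eq, Finset.mem_Icc] at h1 h2
    have hc : (a1 : ZMod Q) = (a2 : ZMod Q) := by rw [h1.2, h2.2]
    rw [ZMod.intCast_eq_intCast_iff] at hc
    have hc' : (a1 + L) % Q = (a2 + L) % Q := hc.add_right (L:ℤ)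
    set n1 := (a1 + L).toNat with hn1
    set n2 := (a2 + L).toNat with hn2
    have e1 : (n1 : ℤ) = a1 + L := Int.toNat_of_nonneg (by omega)
    have e2 : (n2 : ℤ) = a2 + L := Int.toNat_of_nonneg (by omega)
    have hmod : n1 % Q = n2 % Q := by
      have : ((n1 % Q : ℕ) : ℤ) = ((n2 % Q : ℕ) : ℤ) := by
        push_cast
        rw [e1, e2]; exact hc'
      exact_mod_cast this
    have d1 := Nat.div_add_mod n1 Q
    have d2 := Nat.div_add_mod n2 Q
    have heq' : n1 / Q = n2 / Q := heq
    have hn : n1 = n2 := by rw [← d1, ← d2, heq', hmod]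
    omega

lemma aux_inj {T : Finset ℕ} (hT : ∀ p ∈ T, Nat.Prime p) (x y : ZMod (∏ p ∈ T, p))
    (h : ∀ p : T, ZMod.castHom (Finset.dvd_prod_of_mem _ p.2) (ZMod (p:ℕ)) x =
      ZMod.castHom (Finset.dvd_prod_of_mem _ p.2) (ZMod (p:ℕ)) y) : x = y := by
  have hQpos : 0 < ∏ p ∈ T, p := Finset.prod_pos (fun p hp => (hT p hp).pos)
  haveI : NeZero (∏ p ∈ T, p) := ⟨hQpos.ne'⟩
  set v := (x - y).val with hv
  have hdvd : ∀ p ∈ T, p ∣ v := by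
    intro p hp
    haveI : NeZero p := ⟨(hT p hp).pos.ne'⟩
    have h0 : ZMod.castHom (Finset.dvd_prod_of_mem _ hp) (ZMod p) (x - y) = 0 := by
      rw [map_sub, h ⟨p, hp⟩, sub_self]
    rw [ZMod.castHom_apply, ← ZMod.natCast_val] at h0
    exact (ZMod.natCast_eq_zero_iff _ _).1 h0
  have hQdvd : (∏ p ∈ T, p) ∣ v :=
    Finset.prod_primes_dvd v (fun p hp => (hT p hp).prime) hdvd
  have hlt : v < ∏ p ∈ T, p := ZMod.val_lt _
  have hv0 : v = 0 := by
    rcases Nat.eq_zero_or_pos v with h0 | h0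
    · exact h0
    · exact absurd (Nat.le_of_dvd h0 hQdvd) (not_le.2 hlt)
  exact sub_eq_zero.1 ((ZMod.val_eq_zero _).1 hv0)

lemma aux_allowed_card (m : ℕ) (T : Finset ℕ) (hT : ∀ p ∈ T, Nat.Prime p)
    (W : ∀ p : ℕ, Finset (Fin m → ZMod p)) [NeZero (∏ p ∈ T, p)] :
    (Finset.univ.filter (fun r : Fin m → ZMod (∏ p ∈ T, p) =>
        ∀ p : T, (fun i => ZMod.castHom (Finset.dvd_prod_of_mem _ p.2) (ZMod (p:ℕ)) (r i))
          ∉ W (p:ℕ))).card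
      ≤ ∏ p ∈ T, (p ^ m - (W p).card) := by
  haveI : ∀ p : T, NeZero (p:ℕ) := fun p => ⟨(hT p.1 p.2).pos.ne'⟩
  set B : Finset (∀ p : T, Fin m → ZMod (p:ℕ)) :=
    Fintype.piFinset (fun p : T => Finset.univ.filter
      (fun w : Fin m → ZMod (p:ℕ) => w ∉ W (p:ℕ))) with hB
  have hle := Finset.card_le_card_of_injOn
    (s := Finset.univ.filter (fun r : Fin m → ZMod (∏ p ∈ T, p) =>
        ∀ p : T, (fun i => ZMod.castHom (Finset.dvd_prod_of_mem _ p.2) (ZMod (p:ℕ)) (r i))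
          ∉ W (p:ℕ))) (t := B)
    (fun (r : Fin m → ZMod (∏ p ∈ T, p)) (p : T) (i : Fin m) =>
      ZMod.castHom (Finset.dvd_prod_of_mem _ p.2) (ZMod (p:ℕ)) (r i))
    (by
      intro r hr
      simp only [Finset.mem_coe, Finset.mem_filter, Finset.mem_univ, true_and] at hr
      rw [Finset.mem_coe, hB, Fintype.mem_piFinset]
      intro p
      simp only [Finset.mem_filter, Finset.mem_univ, true_and]
      exact hr p)
    (by
      intro r1 _ r2 _ heq
      funext i
      apply aux_inj hT
      intro p
      exact congrFun (congrFun heq p) i)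
  refine hle.trans (le_of_eq ?_)
  rw [hB, Fintype.card_piFinset]
  rw [← Finset.prod_coe_sort T (fun p => p ^ m - (W p).card)]
  apply Finset.prod_congr rfl
  intro p _
  rw [Finset.filter_not, Finset.filter_univ_mem, Finset.card_sdiff_of_subset (Finset.subset_univ _),
    Finset.card_univ, Fintype.card_fun, ZMod.card, Fintype.card_fin]

/-- The upper density of `V(S)` along cubes `[−L,L]^m` is at most
`∏_{p ≤ P} (1 − s(p)/p^m)` for every bound `P`. -/
theorem stmt16 (m : ℕ) (hm : 2 ≤ m) (S : Finset (Fin m → ℤ)) (P : ℕ) :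
    Filter.limsup
      (fun L : ℕ =>
        (Nat.card {z : Fin m → ℤ // (∀ i, |z i| ≤ (L : ℤ)) ∧
            ∀ x ∈ S, Finset.univ.gcd (fun i => z i - x i) = 1} : ℝ) /
          ((2 * L : ℝ)) ^ m)
      Filter.atTop ≤
    ∏ p ∈ (Finset.range (P + 1)).filter Nat.Prime,
      (1 - ((S.image (fun z : Fin m → ℤ => fun i => ((z i : ZMod p)))).card : ℝ) /
        (p : ℝ) ^ m) := by
  set T := (Finset.range (P + 1)).filter Nat.Prime with hTdef
  have hT : ∀ p ∈ T, Nat.Prime p := fun p hp => (Finset.mem_filter.1 hp).2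
  set W : ∀ p : ℕ, Finset (Fin m → ZMod p) :=
    fun p => S.image (fun z : Fin m → ℤ => fun i => ((z i : ZMod p))) with hWdef
  set Q := ∏ p ∈ T, p with hQdef
  have hQpos : 0 < Q := Finset.prod_pos (fun p hp => (hT p hp).pos)
  haveI : NeZero Q := ⟨hQpos.ne'⟩
  haveI hPT : ∀ p : T, NeZero (p:ℕ) := fun p => ⟨(hT p.1 p.2).pos.ne'⟩
  set N : ℕ := ∏ p ∈ T, (p ^ m - (W p).card) with hNdef
  -- counting bound for each L
  have key : ∀ L : ℕ,
      (Nat.card {z : Fin m → ℤ // (∀ i, |z i| ≤ (L : ℤ)) ∧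
        ∀ x ∈ S, Finset.univ.gcd (fun i => z i - x i) = 1}) ≤ N * (2*L/Q + 1)^m := by
    intro L
    set Box := Fintype.piFinset (fun _ : Fin m => Finset.Icc (-(L:ℤ)) (L:ℤ)) with hBox
    set VFin := Box.filter
      (fun z => ∀ x ∈ S, Finset.univ.gcd (fun i => z i - x i) = 1) with hVFin
    have hcardeq : Nat.card {z : Fin m → ℤ // (∀ i, |z i| ≤ (L : ℤ)) ∧
        ∀ x ∈ S, Finset.univ.gcd (fun i => z i - x i) = 1} = VFin.card := by
      rw [← Nat.card_eq_finsetCard]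
      apply Nat.card_congr
      apply Equiv.subtypeEquivRight
      intro z
      simp only [hVFin, Finset.mem_filter, hBox, Fintype.mem_piFinset, Finset.mem_Icc, abs_le]
    rw [hcardeq]
    set Allowed := Finset.univ.filter (fun r : Fin m → ZMod Q =>
        ∀ p : T, (fun i => ZMod.castHom (Finset.dvd_prod_of_mem _ p.2) (ZMod (p:ℕ)) (r i))
          ∉ W (p:ℕ)) with hAllowed
    have h2 : VFin.card ≤ (2*L/Q + 1)^m * Allowed.card := by
      apply Finset.card_le_mul_card_image_of_maps_to
        (f := fun (z : Fin m → ℤ) (i : Fin m) => ((z i : ZMod Q)))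
      · -- maps to Allowed
        intro z hz
        simp only [hVFin, Finset.mem_filter] at hz
        simp only [hAllowed, Finset.mem_filter, Finset.mem_univ, true_and]
        intro p hmem
        obtain ⟨x, hxS, hxeq⟩ := Finset.mem_image.1 hmem
        have hpp := hT p.1 p.2
        have hdvdall : ∀ i, ((p:ℕ):ℤ) ∣ z i - x i := by
          intro i
          have h1 : (x i : ZMod (p:ℕ)) =
              ZMod.castHom (Finset.dvd_prod_of_mem _ p.2) (ZMod (p:ℕ)) ((z i : ZMod Q)) :=
            congrFun hxeq i
          rw [map_intCast] at h1
          rw [← ZMod.intCast_zmod_eq_zero_iff_dvd]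
          push_cast
          rw [sub_eq_zero, ← h1]
        have hgcd : ((p:ℕ):ℤ) ∣ Finset.univ.gcd (fun i => z i - x i) :=
          Finset.dvd_gcd (fun i _ => hdvdall i)
        rw [hz.2 x hxS] at hgcd
        have : (p:ℕ) ∣ 1 := by exact_mod_cast hgcd
        exact absurd (Nat.dvd_one.1 this) hpp.one_lt.ne'
      · -- fiber bound
        intro b hb
        have hsub : VFin.filter (fun z => (fun i => ((z i : ZMod Q))) = b) ⊆
            Box.filter (fun z => ∀ i, ((z i : ZMod Q) = b i)) := by
          intro z hz
          simp only [hVFin, Finset.mem_filter] at hz ⊢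
          exact ⟨hz.1.1, fun i => congrFun hz.2 i⟩
        have hsub2 : Box.filter (fun z => ∀ i, ((z i : ZMod Q) = b i)) ⊆
            Fintype.piFinset (fun i => (Finset.Icc (-(L:ℤ)) (L:ℤ)).filter
              (fun a : ℤ => ((a : ZMod Q) = b i))) := by
          intro z hz
          simp only [hBox, Finset.mem_filter, Fintype.mem_piFinset] at hz ⊢
          exact fun i => ⟨hz.1 i, hz.2 i⟩
        refine (Finset.card_le_card (hsub.trans hsub2)).trans ?_
        rw [Fintype.card_piFinset]
        calc ∏ i : Fin m, ((Finset.Icc (-(L:ℤ)) (L:ℤ)).filter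
              (fun a : ℤ => ((a : ZMod Q) = b i))).card
            ≤ ∏ _i : Fin m, (2*L/Q + 1) :=
              Finset.prod_le_prod' (fun i _ => aux_count_residue L Q (b i))
          _ = (2*L/Q + 1)^m := by rw [Finset.prod_const, Finset.card_univ, Fintype.card_fin]
    have h3 : Allowed.card ≤ N := aux_allowed_card m T hT W
    calc VFin.card ≤ (2*L/Q + 1)^m * Allowed.card := h2
      _ ≤ (2*L/Q + 1)^m * N := Nat.mul_le_mul_left _ h3
      _ = N * (2*L/Q + 1)^m := Nat.mul_comm _ _
  -- the comparison sequence
  set g : ℕ → ℝ := fun L => (N : ℝ) * ((1:ℝ)/Q + 1/(2*L))^m with hg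
  have hgt : Tendsto g atTop (𝓝 ((N : ℝ) * ((1:ℝ)/Q)^m)) := by
    have h1 : Tendsto (fun L : ℕ => (2:ℝ)*L) atTop atTop :=
      (tendsto_natCast_atTop_atTop).const_mul_atTop (by norm_num)
    have h2a : Tendsto (fun L : ℕ => ((2:ℝ)*L)⁻¹) atTop (𝓝 0) := h1.inv_tendsto_atTop
    have h2 : Tendsto (fun L : ℕ => (1:ℝ)/(2*L)) atTop (𝓝 0) := by
      simpa only [one_div] using h2a
    have h3 : Tendsto (fun L : ℕ => (1:ℝ)/Q + 1/(2*L)) atTop (𝓝 ((1:ℝ)/Q + 0)) :=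
      tendsto_const_nhds.add h2
    rw [add_zero] at h3
    exact tendsto_const_nhds.mul (h3.pow m)
  have hfg : ∀ᶠ L : ℕ in atTop, (Nat.card {z : Fin m → ℤ // (∀ i, |z i| ≤ (L : ℤ)) ∧
      ∀ x ∈ S, Finset.univ.gcd (fun i => z i - x i) = 1} : ℝ) / ((2 * L : ℝ)) ^ m ≤ g L := by
    filter_upwards [eventually_ge_atTop 1] with L hL
    have hL1 : (1:ℝ) ≤ (L:ℝ) := by exact_mod_cast hL
    have h2L : (0:ℝ) < 2*L := by linarith
    have hKle : ((2*L/Q + 1 : ℕ) : ℝ) ≤ (2*(L:ℝ)) * ((1:ℝ)/Q + 1/(2*(L:ℝ))) := by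
      have h1 : ((2*L/Q : ℕ) : ℝ) ≤ ((2*L : ℕ):ℝ)/(Q:ℝ) := Nat.cast_div_le
      have hexp : (2*(L:ℝ)) * ((1:ℝ)/Q + 1/(2*(L:ℝ))) = (2*(L:ℝ))/Q + 1 := by
        field_simp
      rw [hexp]
      push_cast at h1 ⊢
      linarith
    have hnum : (Nat.card {z : Fin m → ℤ // (∀ i, |z i| ≤ (L : ℤ)) ∧
        ∀ x ∈ S, Finset.univ.gcd (fun i => z i - x i) = 1} : ℝ)
        ≤ (N:ℝ) * ((2*L/Q + 1 : ℕ):ℝ)^m := by exact_mod_cast key L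
    have hxnn : (0:ℝ) ≤ (1:ℝ)/Q + 1/(2*(L:ℝ)) := by positivity
    have hstep : (Nat.card {z : Fin m → ℤ // (∀ i, |z i| ≤ (L : ℤ)) ∧
        ∀ x ∈ S, Finset.univ.gcd (fun i => z i - x i) = 1} : ℝ)
        ≤ (N:ℝ) * ((2*(L:ℝ)) * ((1:ℝ)/Q + 1/(2*(L:ℝ))))^m := by
      refine hnum.trans ?_
      gcongr
    rw [div_le_iff₀ (by positivity)]
    calc (Nat.card {z : Fin m → ℤ // (∀ i, |z i| ≤ (L : ℤ)) ∧
        ∀ x ∈ S, Finset.univ.gcd (fun i => z i - x i) = 1} : ℝ)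
        ≤ (N:ℝ) * ((2*(L:ℝ)) * ((1:ℝ)/Q + 1/(2*(L:ℝ))))^m := hstep
      _ = g L * (2*(L:ℝ))^m := by rw [hg, mul_pow]; ring
  have hcob : Filter.IsCoboundedUnder (· ≤ ·) atTop
      (fun L : ℕ => (Nat.card {z : Fin m → ℤ // (∀ i, |z i| ≤ (L : ℤ)) ∧
        ∀ x ∈ S, Finset.univ.gcd (fun i => z i - x i) = 1} : ℝ) / ((2 * L : ℝ)) ^ m) := by
    apply Filter.IsBoundedUnder.isCoboundedUnder_le
    refine ⟨0, Filter.eventually_map.2 (Eventually.of_forall (fun L => by positivity))⟩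
  refine le_trans (Filter.limsup_le_limsup hfg hcob hgt.isBoundedUnder_le) ?_
  rw [hgt.limsup_eq]
  have hsle : ∀ p ∈ T, (W p).card ≤ p^m := by
    intro p hp
    haveI : NeZero p := ⟨(hT p hp).pos.ne'⟩
    calc (W p).card ≤ Fintype.card (Fin m → ZMod p) := Finset.card_le_univ _
      _ = p^m := by rw [Fintype.card_fun, ZMod.card, Fintype.card_fin]
  have hNcast : (N:ℝ) = ∏ p ∈ T, ((p:ℝ)^m - ((W p).card:ℝ)) := by
    rw [hNdef, Nat.cast_prod]
    apply Finset.prod_congr rfl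
    intro p hp
    rw [Nat.cast_sub (hsle p hp)]
    push_cast
    ring
  have hQcast : ((1:ℝ)/Q)^m = ∏ p ∈ T, ((p:ℝ)^m)⁻¹ := by
    simp only [one_div]
    rw [hQdef, Nat.cast_prod, ← Finset.prod_inv_distrib, ← Finset.prod_pow]
    apply Finset.prod_congr rfl
    intro p _
    rw [inv_pow]
  rw [hNcast, hQcast, ← Finset.prod_mul_distrib]
  apply le_of_eq
  apply Finset.prod_congr rfl
  intro p hp
  have hppos : (0:ℝ) < (p:ℝ)^m := by
    have := (hT p hp).pos
    positivity
  field_simp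
  rfl
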